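/- arXiv:1806.05572 — 2 statements merged into one kernel-verified Lean document; each statement's English description precedes it below -/
import Mathlib

section
/- Let E be a finite-dimensional real normed space with a continuous family of linear maps T_t : E → E (t ≥ 0, cocycle over a flow) satisfying ‖T_t u‖ ≤ K e^{−λ t}‖u‖ for all t ≥ 0. Fix ξ ∈ (0, λ/2) and β = K/(λ−2ξ), and define |u| = ∫_0^∞ e^{βξ r} ‖T_{βr} u‖ dr. Then |·| is a well-defined norm on E and satisfies |T_t u| ≤ e^{−ξ t} |u| for all t ≥ 0 and u ∈ E. -/
open MeasureTheory

/-- Gourmelon's averaging construction of an adapted norm: if `T_t` is a continuous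
one-parameter family of linear maps on a finite-dimensional normed space with
`T_0 = id`, the semigroup property for `t, s ≥ 0`, and `‖T_t u‖ ≤ K e^{-λt}‖u‖`, then
for `ξ ∈ (0, λ/2)` and `β = K/(λ-2ξ)` the formula
`|u| = ∫_0^∞ e^{βξr} ‖T_{βr} u‖ dr` defines a norm satisfying
`|T_t u| ≤ e^{-ξt}|u|` for all `t ≥ 0`. -/
theorem adapted_norm_construction
    {E : Type*} [NormedAddCommGroup E] [NormedSpace ℝ E] [FiniteDimensional ℝ E]
    (T : ℝ → E →L[ℝ] E)
    (hTc : Continuous T)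
    (hT0 : T 0 = ContinuousLinearMap.id ℝ E)
    (hTcoc : ∀ t s, 0 ≤ t → 0 ≤ s → T (t + s) = (T t).comp (T s))
    (K lam ξ : ℝ) (hK : 0 < K) (hξ0 : 0 < ξ) (hξ : ξ < lam / 2)
    (hbound : ∀ t, 0 ≤ t → ∀ u, ‖T t u‖ ≤ K * Real.exp (-lam * t) * ‖u‖)
    (β : ℝ) (hβ : β = K / (lam - 2 * ξ))
    (ν : E → ℝ)
    (hν : ∀ u, ν u = ∫ r in Set.Ioi (0:ℝ), Real.exp (β * ξ * r) * ‖T (β * r) u‖) :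
    (∀ u, 0 ≤ ν u) ∧
    (∀ u v, ν (u + v) ≤ ν u + ν v) ∧
    (∀ (c : ℝ) u, ν (c • u) = |c| * ν u) ∧
    (∀ u, ν u = 0 → u = 0) ∧
    (∀ t, 0 ≤ t → ∀ u, ν (T t u) ≤ Real.exp (-ξ * t) * ν u) := by
  have hlam2 : 0 < lam - 2 * ξ := by linarith
  have hβpos : 0 < β := hβ ▸ div_pos hK hlam2
  have hlamξ : 0 < β * (lam - ξ) := by
    apply mul_pos hβpos; linarith
  set f : E → ℝ → ℝ := fun u r => Real.exp (β * ξ * r) * ‖T (β * r) u‖ with hf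
  have hcont : ∀ u, Continuous (f u) := by
    intro u
    apply Continuous.mul
    · exact Real.continuous_exp.comp (continuous_const.mul continuous_id)
    · exact (Continuous.clm_apply (hTc.comp (continuous_const.mul continuous_id))
        continuous_const).norm
  have hfnonneg : ∀ u r, 0 ≤ f u r := fun u r =>
    mul_nonneg (Real.exp_pos _).le (norm_nonneg _)
  have hint : ∀ u, IntegrableOn (f u) (Set.Ioi 0) := by
    intro u
    apply Integrable.mono'
      (g := fun r => (K * ‖u‖) * Real.exp (-(β * (lam - ξ)) * r))
    · exact ((exp_neg_integrableOn_Ioi 0 hlamξ).const_mul _)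
    · exact ((hcont u).aestronglyMeasurable).restrict
    · filter_upwards [ae_restrict_mem measurableSet_Ioi] with r hr
      have hr0 : (0:ℝ) ≤ r := le_of_lt hr
      have hbr : 0 ≤ β * r := mul_nonneg hβpos.le hr0
      have h1 : ‖T (β * r) u‖ ≤ K * Real.exp (-lam * (β * r)) * ‖u‖ :=
        hbound _ hbr u
      rw [Real.norm_eq_abs, abs_of_nonneg (hfnonneg u r)]
      calc f u r ≤ Real.exp (β * ξ * r) * (K * Real.exp (-lam * (β * r)) * ‖u‖) :=
            mul_le_mul_of_nonneg_left h1 (Real.exp_pos _).le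
        _ = (K * ‖u‖) * (Real.exp (β * ξ * r) * Real.exp (-lam * (β * r))) := by ring
        _ = (K * ‖u‖) * Real.exp (-(β * (lam - ξ)) * r) := by
            rw [← Real.exp_add]; congr 1; ring
  have h1 : ∀ u, 0 ≤ ν u := by
    intro u
    rw [hν u]
    exact setIntegral_nonneg measurableSet_Ioi fun r _ => hfnonneg u r
  refine ⟨h1, ?_, ?_, ?_, ?_⟩
  · -- subadditive
    intro u v
    rw [hν u, hν v, hν (u + v), ← integral_add (hint u) (hint v)]
    apply setIntegral_mono_on (hint (u + v)) ((hint u).add (hint v)) measurableSet_Ioi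
    intro r _
    simp only [hf, map_add]
    calc Real.exp (β * ξ * r) * ‖T (β * r) u + T (β * r) v‖
        ≤ Real.exp (β * ξ * r) * (‖T (β * r) u‖ + ‖T (β * r) v‖) :=
          mul_le_mul_of_nonneg_left (norm_add_le _ _) (Real.exp_pos _).le
      _ = _ := by simp only [Pi.add_apply]; ring
  · -- homogeneous
    intro c u
    rw [hν u, hν (c • u), ← integral_const_mul]
    apply setIntegral_congr_fun measurableSet_Ioi
    intro r _
    simp only [ContinuousLinearMap.map_smul, norm_smul, Real.norm_eq_abs]
    ring
  · -- definite
    intro u hu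
    by_contra hu0
    have hnorm : 0 < ‖u‖ := norm_pos_iff.mpr hu0
    have hf0 : f u 0 = ‖u‖ := by simp [hf, hT0]
    have hpos : 0 < ν u := by
      rw [hν u]
      rw [setIntegral_pos_iff_support_of_nonneg_ae
        (Filter.Eventually.of_forall fun r => hfnonneg u r) (hint u)]
      have hca : ContinuousAt (f u) 0 := (hcont u).continuousAt
      have hev : ∀ᶠ r in nhds (0:ℝ), 0 < f u r :=
        ContinuousAt.eventually_lt continuousAt_const hca (by rw [hf0]; exact hnorm)
      obtain ⟨δ, hδ0, hδ⟩ := Metric.eventually_nhds_iff_ball.mp hev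
      have hsub : Set.Ioo 0 δ ⊆ Function.support (f u) ∩ Set.Ioi 0 := by
        intro r hr
        refine ⟨ne_of_gt (hδ r ?_), hr.1⟩
        rw [Metric.mem_ball, Real.dist_eq, sub_zero, abs_of_pos hr.1]
        exact hr.2
      calc (0:ENNReal) < ENNReal.ofReal δ := by simpa using hδ0
        _ = volume (Set.Ioo (0:ℝ) δ) := by rw [Real.volume_Ioo, sub_zero]
        _ ≤ volume (Function.support (f u) ∩ Set.Ioi 0) := measure_mono hsub
    linarith
  · -- contraction
    intro t ht u
    set c := t / β with hcdef
    have hc0 : 0 ≤ c := div_nonneg ht hβpos.le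
    have hβc : β * c = t := by rw [hcdef]; field_simp [hβpos.ne']
    have hexp1 : Real.exp (-ξ * t) * Real.exp (ξ * t) = 1 := by
      rw [← Real.exp_add]; simp
    have step1 : ν (T t u) = ∫ r in Set.Ioi (0:ℝ),
        Real.exp (-ξ * t) * f u (r + c) := by
      rw [hν (T t u)]
      apply setIntegral_congr_fun measurableSet_Ioi
      intro r hr
      have hbr : 0 ≤ β * r := mul_nonneg hβpos.le (le_of_lt hr)
      have happ : T (β * r) (T t u) = T (β * r + t) u := by
        rw [hTcoc _ _ hbr ht]; rfl
      have harg : β * (r + c) = β * r + t := by rw [mul_add, hβc]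
      have hexp : β * ξ * (r + c) = β * ξ * r + ξ * t := by
        have h : β * ξ * c = ξ * t := by rw [mul_comm β ξ, mul_assoc, hβc]
        rw [mul_add, h]
      simp only [hf, happ, harg, hexp, Real.exp_add]
      rw [show Real.exp (-ξ * t) * (Real.exp (β * ξ * r) * Real.exp (ξ * t) *
          ‖T (β * r + t) u‖) = (Real.exp (-ξ * t) * Real.exp (ξ * t)) *
          (Real.exp (β * ξ * r) * ‖T (β * r + t) u‖) by ring, hexp1, one_mul]
    have step2 : ∫ r in Set.Ioi (0:ℝ), f u (r + c)
        = ∫ s in Set.Ioi c, f u s := by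
      have hmp : MeasurePreserving (fun r : ℝ => r + c) volume volume :=
        measurePreserving_add_right volume c
      have hemb : MeasurableEmbedding (fun r : ℝ => r + c) :=
        (Homeomorph.addRight c).measurableEmbedding
      have hpre : (fun r : ℝ => r + c) ⁻¹' (Set.Ioi c) = Set.Ioi 0 := by
        ext r; simp [Set.mem_preimage, Set.mem_Ioi]
      rw [← hpre]
      exact hmp.setIntegral_preimage_emb hemb (f u) (Set.Ioi c)
    have step3 : ∫ s in Set.Ioi c, f u s ≤ ∫ s in Set.Ioi (0:ℝ), f u s := by
      apply setIntegral_mono_set (hint u)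
        (Filter.Eventually.of_forall fun r => hfnonneg u r)
      exact HasSubset.Subset.eventuallyLE (Set.Ioi_subset_Ioi hc0)
    rw [step1, integral_const_mul, step2, hν u]
    exact mul_le_mul_of_nonneg_left step3 (Real.exp_pos _).le
end

section
/- Let A : V → V be an invertible linear map on a finite-dimensional real inner product space preserving an invariant splitting V = E^c ⊕ F with dim F = 1, satisfying: ‖A^{-1}|_F‖ ≤ e^{(λ−α)} · m(A^{-1}|_{E^c}) in the strong sense that ‖A^{-1} f‖ ≤ e^{λ−α}‖A^{-1} ṽ‖ for unit vectors f ∈ F, ṽ ∈ E^c (with α > λ > 0), and ‖∧²A^{-1}|_{∧²E^c}‖ ≤ K e^{−λ}. If A(E^c) ⊥ A(F) (images orthogonal) and E^c ⊥ F, then for any unit vectors f ∈ F, v ∈ E^c: ‖(∧²A^{-1})(f ∧ v)‖ ≤ K e^{−α}. -/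
open scoped InnerProductSpace
open Module

/-- An abstract model of the `p`-th exterior power of a real inner product space `E`:
a space `Λ` together with a map `wedge` on `p`-tuples which is alternating multilinear,
whose image spans `Λ`, and whose inner product is given by the Gram determinant formula. -/
structure IsInducedExteriorPower (p : ℕ)
    (E : Type*) [NormedAddCommGroup E] [InnerProductSpace ℝ E]
    (Λ : Type*) [NormedAddCommGroup Λ] [InnerProductSpace ℝ Λ]
    (wedge : (Fin p → E) → Λ) : Prop where
  alternating : ∃ w : E [⋀^Fin p]→ₗ[ℝ] Λ, ⇑w = wedge
  gram : ∀ u v : Fin p → E,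
    ⟪wedge u, wedge v⟫_ℝ = (Matrix.of fun i j => (⟪u i, v j⟫_ℝ)).det
  spanning : Submodule.span ℝ (Set.range wedge) = ⊤


lemma norm_wedge_sq {V Λ : Type*}
    [NormedAddCommGroup V] [InnerProductSpace ℝ V]
    [NormedAddCommGroup Λ] [InnerProductSpace ℝ Λ]
    {wedge : (Fin 2 → V) → Λ}
    (hw : IsInducedExteriorPower 2 V Λ wedge) (x y : V) :
    ‖wedge ![x, y]‖ ^ 2 = ‖x‖ ^ 2 * ‖y‖ ^ 2 - ⟪x, y⟫_ℝ ^ 2 := by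
  have h := hw.gram ![x, y] ![x, y]
  rw [real_inner_self_eq_norm_sq] at h
  rw [h, Matrix.det_fin_two]
  simp only [Matrix.of_apply, Matrix.cons_val_zero, Matrix.cons_val_one, Matrix.head_cons]
  rw [real_inner_self_eq_norm_sq, real_inner_self_eq_norm_sq, real_inner_comm y x]
  ring

lemma norm_wedge_of_orthog {V Λ : Type*}
    [NormedAddCommGroup V] [InnerProductSpace ℝ V]
    [NormedAddCommGroup Λ] [InnerProductSpace ℝ Λ]
    {wedge : (Fin 2 → V) → Λ}
    (hw : IsInducedExteriorPower 2 V Λ wedge) (x y : V) (h : ⟪x, y⟫_ℝ = 0) :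
    ‖wedge ![x, y]‖ = ‖x‖ * ‖y‖ := by
  have h2 : ‖wedge ![x, y]‖ ^ 2 = (‖x‖ * ‖y‖) ^ 2 := by
    rw [norm_wedge_sq hw, h]; ring
  calc ‖wedge ![x, y]‖ = √(‖wedge ![x, y]‖ ^ 2) := (Real.sqrt_sq (norm_nonneg _)).symm
    _ = √((‖x‖ * ‖y‖) ^ 2) := by rw [h2]
    _ = ‖x‖ * ‖y‖ := Real.sqrt_sq (by positivity)

lemma norm_wedge_le {V Λ : Type*}
    [NormedAddCommGroup V] [InnerProductSpace ℝ V]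
    [NormedAddCommGroup Λ] [InnerProductSpace ℝ Λ]
    {wedge : (Fin 2 → V) → Λ}
    (hw : IsInducedExteriorPower 2 V Λ wedge) (x y : V) :
    ‖wedge ![x, y]‖ ≤ ‖x‖ * ‖y‖ := by
  have h2 : ‖wedge ![x, y]‖ ^ 2 ≤ (‖x‖ * ‖y‖) ^ 2 := by
    rw [norm_wedge_sq hw]; nlinarith [sq_nonneg (⟪x, y⟫_ℝ)]
  nlinarith [norm_nonneg (wedge ![x, y]), norm_nonneg x, norm_nonneg y,
    mul_nonneg (norm_nonneg x) (norm_nonneg y)]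

/-- Key computation for extending sectional expansion from `Eᶜ` to `Eᶜ ⊕ F` under strong
domination: let `A : V → V` be invertible, preserving an orthogonal splitting
`V = Eᶜ ⊕ F` with `dim F = 1` and `dim Eᶜ ≥ 2`. Suppose `‖A⁻¹ f‖ ≤ e^{λ-α}‖A⁻¹ ṽ‖` for
all unit vectors `f ∈ F`, `ṽ ∈ Eᶜ` (with `α > λ > 0`), that
`‖(∧²A⁻¹)w‖ ≤ K e^{-λ}‖w‖` on `∧²Eᶜ`, and that `A(Eᶜ) ⊥ A(F)`. Then for all unit
vectors `f ∈ F` and `v ∈ Eᶜ` one has `‖(∧²A⁻¹)(f ∧ v)‖ ≤ K e^{-α}`. -/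
theorem sectional_expansion_extension
    {V Λ : Type*}
    [NormedAddCommGroup V] [InnerProductSpace ℝ V] [FiniteDimensional ℝ V]
    [NormedAddCommGroup Λ] [InnerProductSpace ℝ Λ]
    (wedge : (Fin 2 → V) → Λ)
    (hw : IsInducedExteriorPower 2 V Λ wedge)
    (A : V ≃ₗ[ℝ] V)
    (Ec F : Submodule ℝ V)
    (hdimF : finrank ℝ F = 1) (hdimEc : 2 ≤ finrank ℝ Ec)
    (hortho : ∀ x ∈ Ec, ∀ y ∈ F, ⟪x, y⟫_ℝ = 0)
    (hsum : Ec ⊔ F = ⊤)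
    (hAEc : Submodule.map A.toLinearMap Ec = Ec)
    (hAF : Submodule.map A.toLinearMap F = F)
    (hAortho : ∀ x ∈ Ec, ∀ y ∈ F, ⟪A x, A y⟫_ℝ = 0)
    (K lam α : ℝ) (hK : 0 < K) (hlam : 0 < lam) (hα : lam < α)
    (hdom : ∀ f ∈ F, ‖f‖ = 1 → ∀ vt ∈ Ec, ‖vt‖ = 1 →
      ‖A.symm f‖ ≤ Real.exp (lam - α) * ‖A.symm vt‖)
    (A2inv : Λ →ₗ[ℝ] Λ)
    (hA2inv : ∀ x : Fin 2 → V, A2inv (wedge x) = wedge (fun i => A.symm (x i)))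
    (hEc2 : ∀ w ∈ Submodule.span ℝ
        {w : Λ | ∃ u v : V, u ∈ Ec ∧ v ∈ Ec ∧ w = wedge ![u, v]},
      ‖A2inv w‖ ≤ K * Real.exp (-lam) * ‖w‖) :
    ∀ f ∈ F, ‖f‖ = 1 → ∀ v ∈ Ec, ‖v‖ = 1 →
      ‖A2inv (wedge ![f, v])‖ ≤ K * Real.exp (-α) := by
  intro f hf hfn v hv hvn
  have hv0 : v ≠ 0 := by intro h; rw [h, norm_zero] at hvn; norm_num at hvn
  -- A.symm preserves the subspaces
  have hsymmEc : ∀ x ∈ Ec, A.symm x ∈ Ec := by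
    intro x hx
    rw [← hAEc] at hx
    obtain ⟨y, hy, hyx⟩ := hx
    have : A.symm x = y := by
      apply A.injective; simp [LinearEquiv.apply_symm_apply]; exact hyx.symm ▸ rfl
    rwa [this]
  have hsymmF : ∀ x ∈ F, A.symm x ∈ F := by
    intro x hx
    rw [← hAF] at hx
    obtain ⟨y, hy, hyx⟩ := hx
    have : A.symm x = y := by
      apply A.injective; simp [LinearEquiv.apply_symm_apply]; exact hyx.symm ▸ rfl
    rwa [this]
  have hv1 : A.symm v ∈ Ec := hsymmEc v hv
  have hf1 : A.symm f ∈ F := hsymmF f hf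
  have hv10 : A.symm v ≠ 0 := fun h => hv0 (by simpa using congrArg A h)
  -- find w ∈ Ec outside span {v}
  have hspan_lt : Submodule.span ℝ {v} < Ec := by
    refine lt_of_le_of_ne ((Submodule.span_le).2 (by simpa using hv)) ?_
    intro h
    rw [← h, finrank_span_singleton hv0] at hdimEc
    omega
  obtain ⟨w, hwEc, hwspan⟩ := SetLike.exists_of_lt hspan_lt
  -- build u ∈ Ec with ⟪A⁻¹u, A⁻¹v⟫ = 0
  set c : ℝ := ⟪A.symm w, A.symm v⟫_ℝ / ⟪A.symm v, A.symm v⟫_ℝ with hc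
  set u : V := w - c • v with hu
  have huEc : u ∈ Ec := Submodule.sub_mem _ hwEc (Submodule.smul_mem _ _ hv)
  have hu0 : u ≠ 0 := by
    intro h
    apply hwspan
    rw [Submodule.mem_span_singleton]
    exact ⟨c, by rw [eq_comm, ← sub_eq_zero]; simpa [hu, sub_eq_zero, eq_comm] using h⟩
  have hinner_vv : ⟪A.symm v, A.symm v⟫_ℝ ≠ 0 := inner_self_ne_zero.2 hv10
  have huorth : ⟪A.symm u, A.symm v⟫_ℝ = 0 := by
    rw [hu, map_sub, map_smul, inner_sub_left, real_inner_smul_left, hc]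
    field_simp
    ring
  -- normalize
  set vt : V := ‖u‖⁻¹ • u with hvt
  have hvtEc : vt ∈ Ec := Submodule.smul_mem _ _ huEc
  have hvtn : ‖vt‖ = 1 := by
    rw [hvt, norm_smul, norm_inv, norm_norm, inv_mul_cancel₀ (norm_ne_zero_iff.2 hu0)]
  have hvtorth : ⟪A.symm vt, A.symm v⟫_ℝ = 0 := by
    rw [hvt, map_smul, real_inner_smul_left, huorth, mul_zero]
  -- key bound on ‖A⁻¹vt‖ * ‖A⁻¹v‖
  have hmem : wedge ![vt, v] ∈ Submodule.span ℝ
      {w : Λ | ∃ u v : V, u ∈ Ec ∧ v ∈ Ec ∧ w = wedge ![u, v]} :=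
    Submodule.subset_span ⟨vt, v, hvtEc, hv, rfl⟩
  have happ : ∀ x y : V, A2inv (wedge ![x, y]) = wedge ![A.symm x, A.symm y] := by
    intro x y
    rw [hA2inv]
    congr 1
    funext i
    fin_cases i <;> simp
  have hkey : ‖A.symm vt‖ * ‖A.symm v‖ ≤ K * Real.exp (-lam) := by
    have h1 := hEc2 _ hmem
    rw [happ, norm_wedge_of_orthog hw _ _ hvtorth] at h1
    have h2 : ‖wedge ![vt, v]‖ ≤ 1 := by
      have := norm_wedge_le hw vt v
      rwa [hvtn, hvn, one_mul] at this
    calc ‖A.symm vt‖ * ‖A.symm v‖ ≤ K * Real.exp (-lam) * ‖wedge ![vt, v]‖ := h1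
      _ ≤ K * Real.exp (-lam) * 1 := by
          apply mul_le_mul_of_nonneg_left h2 (by positivity)
      _ = K * Real.exp (-lam) := mul_one _
  -- domination
  have hdom' : ‖A.symm f‖ ≤ Real.exp (lam - α) * ‖A.symm vt‖ :=
    hdom f hf hfn vt hvtEc hvtn
  -- orthogonality of A⁻¹f and A⁻¹v
  have hfvorth : ⟪A.symm f, A.symm v⟫_ℝ = 0 := by
    rw [real_inner_comm]; exact hortho _ hv1 _ hf1
  rw [happ, norm_wedge_of_orthog hw _ _ hfvorth]
  calc ‖A.symm f‖ * ‖A.symm v‖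
      ≤ (Real.exp (lam - α) * ‖A.symm vt‖) * ‖A.symm v‖ :=
        mul_le_mul_of_nonneg_right hdom' (norm_nonneg _)
    _ = Real.exp (lam - α) * (‖A.symm vt‖ * ‖A.symm v‖) := by ring
    _ ≤ Real.exp (lam - α) * (K * Real.exp (-lam)) :=
        mul_le_mul_of_nonneg_left hkey (Real.exp_pos _).le
    _ = K * (Real.exp (lam - α) * Real.exp (-lam)) := by ring
    _ = K * Real.exp (-α) := by rw [← Real.exp_add]; ring_nf
end
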